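/- Suppose (G, E, φ) is pseudo free. Then the standard action of S_{G,E} on E^∞ is topologically free if and only if the following two conditions hold: (1) every G-circuit has an entry; (2) for every g ∈ G with g ≠ 1 and every vertex x ∈ E⁰, there is at least one ζ ∈ Z(x) with g·ζ ≠ ζ. -/

import Mathlib

/-- Finite paths in a directed graph: `Pth.nil x` is the length-zero path at the
vertex `x`, and `Pth.cons e p` is the path whose first edge is `e`, followed by `p`. -/
inductive Pth (V : Type) (Ed : Type) : Type where
  | nil : V → Pth V Ed
  | cons : Ed → Pth V Ed → Pth V Ed

/-- A self-similar graph `(G, E, φ)`: a group `G` acting on a directed graph `E`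
(with vertex set `V`, edge set `Ed`, range `r` and source `d`) by graph
automorphisms, together with a one-cocycle `φ : G × E¹ → G` for the action on
edges, satisfying `φ(g,e)·x = g·x` for all vertices `x`. -/
structure SelfSimGraph (G V Ed : Type) [Group G] : Type where
  r : Ed → V
  d : Ed → V
  actV : G → V → V
  actE : G → Ed → Ed
  actV_one : ∀ x, actV 1 x = x
  actV_mul : ∀ g h x, actV (g * h) x = actV g (actV h x)
  actE_one : ∀ e, actE 1 e = e
  actE_mul : ∀ g h e, actE (g * h) e = actE g (actE h e)
  r_act : ∀ g e, r (actE g e) = actV g (r e)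
  d_act : ∀ g e, d (actE g e) = actV g (d e)
  phi : G → Ed → G
  phi_cocycle : ∀ g h e, phi (g * h) e = phi g (actE h e) * phi h e
  phi_vertex : ∀ g e x, actV (phi g e) x = actV g x

variable {G V Ed : Type} [Group G]

/-- The range `r(α)` of a finite path. -/
def rngP (S : SelfSimGraph G V Ed) : Pth V Ed → V
  | Pth.nil x => x
  | Pth.cons e _ => S.r e

/-- The source `d(α)` of a finite path. -/
def srcP (S : SelfSimGraph G V Ed) : Pth V Ed → V
  | Pth.nil x => x
  | Pth.cons _ p => srcP S p

/-- Well-formedness of a finite path: consecutive edges match, `d(αᵢ) = r(αᵢ₊₁)`. -/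
def WFP (S : SelfSimGraph G V Ed) : Pth V Ed → Prop
  | Pth.nil _ => True
  | Pth.cons e p => S.d e = rngP S p ∧ WFP S p

/-- The length of a finite path. -/
def lenP : Pth V Ed → ℕ
  | Pth.nil _ => 0
  | Pth.cons _ p => lenP p + 1

/-- Concatenation `αβ` of finite paths (meaningful when `d(α) = r(β)`). -/
def compP : Pth V Ed → Pth V Ed → Pth V Ed
  | Pth.nil _, q => q
  | Pth.cons e p, q => Pth.cons e (compP p q)

/-- The action of `G` extended to finite paths:
`g·x = g·x` on vertices and `g·(eα) = (g·e)(φ(g,e)·α)`. -/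
def actP (S : SelfSimGraph G V Ed) : G → Pth V Ed → Pth V Ed
  | g, Pth.nil x => Pth.nil (S.actV g x)
  | g, Pth.cons e p => Pth.cons (S.actE g e) (actP S (S.phi g e) p)

/-- The cocycle extended to finite paths:
`φ(g,x) = g` on vertices and `φ(g, eα) = φ(φ(g,e), α)`. -/
def phiP (S : SelfSimGraph G V Ed) : G → Pth V Ed → G
  | g, Pth.nil _ => g
  | g, Pth.cons e p => phiP S (S.phi g e) p

/-- A path `τ` is strongly fixed by `g` if `g·τ = τ` and `φ(g,τ) = 1`. -/
def StronglyFixed (S : SelfSimGraph G V Ed) (g : G) (τ : Pth V Ed) : Prop :=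
  WFP S τ ∧ actP S g τ = τ ∧ phiP S g τ = 1

/-- `(G,E,φ)` is pseudo free if `g·e = e` and `φ(g,e) = 1` imply `g = 1`. -/
def PseudoFree (S : SelfSimGraph G V Ed) : Prop :=
  ∀ (g : G) (e : Ed), S.actE g e = e → S.phi g e = 1 → g = 1

/-- `p` is a prefix (initial segment) of `q`: `q = pε` for some path `ε`. -/
def IsPrefixP (S : SelfSimGraph G V Ed) (p q : Pth V Ed) : Prop :=
  ∃ ε, WFP S ε ∧ rngP S ε = srcP S p ∧ compP p ε = q

/-- The set `M_g` of minimal strongly fixed paths for `g`: strongly fixed paths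
none of whose proper prefixes is strongly fixed. -/
def MinSF (S : SelfSimGraph G V Ed) (g : G) : Set (Pth V Ed) :=
  {μ | StronglyFixed S g μ ∧ ∀ p, IsPrefixP S p μ → p ≠ μ → ¬StronglyFixed S g p}

/-- Well-formedness of an infinite path, viewed as a sequence of edges:
`d(ξᵢ) = r(ξᵢ₊₁)`. -/
def InfWF (S : SelfSimGraph G V Ed) (ξ : ℕ → Ed) : Prop :=
  ∀ i, S.d (ξ i) = S.r (ξ (i + 1))

/-- The range `r(ξ)` of an infinite path. -/
def rngInf (S : SelfSimGraph G V Ed) (ξ : ℕ → Ed) : V := S.r (ξ 0)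

/-- `takeP S ξ n` is the finite path `ξ|ₙ = ξ₁⋯ξₙ` (with `ξ|₀ = r(ξ₁)`). -/
def takeP (S : SelfSimGraph G V Ed) : (ℕ → Ed) → ℕ → Pth V Ed
  | ξ, 0 => Pth.nil (S.r (ξ 0))
  | ξ, n + 1 => Pth.cons (ξ 0) (takeP S (fun i => ξ (i + 1)) n)

/-- Membership of an infinite path in the cylinder `Z(α)`:
the initial segment of `ξ` of length `|α|` equals `α`. -/
def InZ (S : SelfSimGraph G V Ed) (α : Pth V Ed) (ξ : ℕ → Ed) : Prop :=
  takeP S ξ (lenP α) = α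

/-- The infinite path `αξ` obtained by prepending a finite path to an infinite one. -/
def prepSeq : Pth V Ed → (ℕ → Ed) → ℕ → Ed
  | Pth.nil _, ξ, n => ξ n
  | Pth.cons e _, _, 0 => e
  | Pth.cons _ p, ξ, n + 1 => prepSeq p ξ n

/-- Dropping the first `k` edges of an infinite path. -/
def dropSeq (k : ℕ) (ξ : ℕ → Ed) : ℕ → Ed := fun n => ξ (n + k)

/-- The space `E^∞` of infinite paths. -/
def InfPath (S : SelfSimGraph G V Ed) : Type := {ξ : ℕ → Ed // InfWF S ξ}

/-- The topology of `E^∞`: the subspace topology induced from the product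
topology on `(E¹)^ℕ`, `E¹` being discrete.  Its basis consists of the
cylinders `Z(α)`. -/
def infTop (S : SelfSimGraph G V Ed) : TopologicalSpace (InfPath S) :=
  TopologicalSpace.induced (fun ξ => ξ.1)
    (@Pi.topologicalSpace ℕ (fun _ => Ed) (fun _ => ⊥))

/-- Specification of the (unique) action of `G` on `E^∞`: `(g·ξ)|ₙ = g·(ξ|ₙ)`. -/
def ActSpec (S : SelfSimGraph G V Ed) (act : G → (ℕ → Ed) → ℕ → Ed) : Prop :=
  ∀ (g : G) (ξ : ℕ → Ed) (n : ℕ), takeP S (act g ξ) n = actP S g (takeP S ξ n)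

/-- The action of a triple `s = (α, g, β) ∈ S_{G,E}` on `E^∞`: it sends
`βξ ∈ Z(β)` to `α(g·ξ)`. -/
def sActSeq (S : SelfSimGraph G V Ed) (act : G → (ℕ → Ed) → ℕ → Ed)
    (α : Pth V Ed) (g : G) (β : Pth V Ed) (ξ : ℕ → Ed) : ℕ → Ed :=
  prepSeq α (act g (dropSeq (lenP β) ξ))

/-- The set of fixed points in `E^∞` of the element `s = (α, g, β)` of `S_{G,E}`. -/
def FixSet (S : SelfSimGraph G V Ed) (act : G → (ℕ → Ed) → ℕ → Ed)
    (α : Pth V Ed) (g : G) (β : Pth V Ed) : Set (InfPath S) :=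
  {η | InZ S β η.1 ∧ sActSeq S act α g β η.1 = η.1}

/-- A vertex `x` is simple if `r⁻¹(x)` is a singleton. -/
def SimpleVtx (S : SelfSimGraph G V Ed) (x : V) : Prop := ∃! e : Ed, S.r e = x

/-- A path `γ = γ₁⋯γₙ` has no entry if `d(γᵢ)` is simple for every `i`. -/
def NoEntry (S : SelfSimGraph G V Ed) : Pth V Ed → Prop
  | Pth.nil _ => True
  | Pth.cons e p => SimpleVtx S (S.d e) ∧ NoEntry S p

/-- A circuit: a path `γ` of nonzero length with `d(γ) = r(γ)`. -/
def Circuit (S : SelfSimGraph G V Ed) (γ : Pth V Ed) : Prop :=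
  WFP S γ ∧ 1 ≤ lenP γ ∧ srcP S γ = rngP S γ

/-- A `G`-circuit: a pair `(g,γ)` with `γ` of nonzero length and `d(γ) = g·r(γ)`. -/
def GCircuit (S : SelfSimGraph G V Ed) (g : G) (γ : Pth V Ed) : Prop :=
  WFP S γ ∧ 1 ≤ lenP γ ∧ srcP S γ = S.actV g (rngP S γ)

/-- `g` is slack at `x` if all sufficiently long paths with range `x` are
strongly fixed by `g`. -/
def SlackAt (S : SelfSimGraph G V Ed) (g : G) (x : V) : Prop :=
  ∃ n : ℕ, ∀ γ, WFP S γ → rngP S γ = x → n ≤ lenP γ → StronglyFixed S g γ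

/-- The sequence `(γⁿ, gₙ)` attached to a `G`-circuit `(g, γ)`:
`γ¹ = γ`, `g₁ = g`, `γⁿ⁺¹ = gₙ·γⁿ`, `gₙ₊₁ = φ(gₙ, γⁿ)` (indexed from `0`). -/
def circIter (S : SelfSimGraph G V Ed) (g : G) (γ : Pth V Ed) : ℕ → Pth V Ed × G
  | 0 => (γ, g)
  | n + 1 =>
      (actP S (circIter S g γ n).2 (circIter S g γ n).1,
       phiP S (circIter S g γ n).2 (circIter S g γ n).1)

/-- The finite concatenation `γ¹γ²⋯γⁿ`. -/
def circConcat (S : SelfSimGraph G V Ed) (g : G) (γ : Pth V Ed) : ℕ → Pth V Ed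
  | 0 => Pth.nil (rngP S γ)
  | n + 1 => compP (circConcat S g γ n) (circIter S g γ n).1

/-- `ξ` is the infinite concatenation `ξ(g,γ) = γ¹γ²γ³⋯`: it is an infinite path
whose initial segments are the finite concatenations `γ¹⋯γⁿ`. -/
def IsCircPath (S : SelfSimGraph G V Ed) (g : G) (γ : Pth V Ed) (ξ : ℕ → Ed) : Prop :=
  InfWF S ξ ∧ ∀ n, takeP S ξ (lenP (circConcat S g γ n)) = circConcat S g γ n

/-- `x ⇀ y`: there is a finite path with source `x` and range `y`. -/
def RelPath (S : SelfSimGraph G V Ed) (x y : V) : Prop :=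
  ∃ α, WFP S α ∧ srcP S α = x ∧ rngP S α = y

/-- `x ∼ y`: `x` and `y` are in the same `G`-orbit. -/
def RelOrb (S : SelfSimGraph G V Ed) (x y : V) : Prop :=
  ∃ g : G, S.actV g x = y

/-- `x ≫ y`: there is a vertex `u` with `x ⇀ u ∼ y`. -/
def RelGG (S : SelfSimGraph G V Ed) (x y : V) : Prop :=
  ∃ u, RelPath S x u ∧ RelOrb S u y

/-- A nonzero element `(α, g, β)` of `S_{G,E}`: `α, β ∈ E*`, `g ∈ G`, with
`d(α) = g·d(β)`. -/
def SGETriple (S : SelfSimGraph G V Ed) : Type :=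
  {t : Pth V Ed × G × Pth V Ed //
    WFP S t.1 ∧ WFP S t.2.2 ∧ srcP S t.1 = S.actV t.2.1 (srcP S t.2.2)}

/-- The inverse semigroup `S_{G,E}` (as a set): the triples together with `0 = none`. -/
def SGE (S : SelfSimGraph G V Ed) : Type := Option (SGETriple S)

/-- Forget the membership proofs. -/
def sgeToRaw (S : SelfSimGraph G V Ed) : SGE S → Option (Pth V Ed × G × Pth V Ed) :=
  Option.map Subtype.val

/-- The adjoint: `(α, g, β)* = (β, g⁻¹, α)`, `0* = 0`. -/
def starSGE (S : SelfSimGraph G V Ed) : SGE S → SGE S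
  | none => none
  | some s =>
      some ⟨(s.1.2.2, s.1.2.1⁻¹, s.1.1),
        ⟨s.2.2.1, s.2.1, by
          rw [s.2.2.2, ← S.actV_mul, inv_mul_cancel, S.actV_one]⟩⟩

/-- The idempotent `f_α = (α, 1, α)`. -/
def fIdem (S : SelfSimGraph G V Ed) (α : Pth V Ed) (h : WFP S α) : SGE S :=
  some ⟨(α, 1, α), ⟨h, h, by rw [S.actV_one]⟩⟩

/-- Specification of the multiplication of `S_{G,E}`:
`0` is absorbing; `(α,g,β)(γ,h,δ) = (α(g·ε), φ(g,ε)h, δ)` if `γ = βε`;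
`(α,g,β)(γ,h,δ) = (α, gφ(h⁻¹,ε)⁻¹, δ(h⁻¹·ε))` if `β = γε`; `0` otherwise. -/
def MulSpec (S : SelfSimGraph G V Ed) (mul : SGE S → SGE S → SGE S) : Prop :=
  (∀ t, mul none t = none) ∧
  (∀ s, mul s none = none) ∧
  (∀ (s t : SGETriple S) (ε : Pth V Ed),
     WFP S ε → rngP S ε = srcP S s.1.2.2 → t.1.1 = compP s.1.2.2 ε →
       sgeToRaw S (mul (some s) (some t)) =
         some (compP s.1.1 (actP S s.1.2.1 ε), phiP S s.1.2.1 ε * t.1.2.1, t.1.2.2)) ∧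
  (∀ (s t : SGETriple S) (ε : Pth V Ed),
     WFP S ε → rngP S ε = srcP S t.1.1 → s.1.2.2 = compP t.1.1 ε →
       sgeToRaw S (mul (some s) (some t)) =
         some (s.1.1, s.1.2.1 * (phiP S t.1.2.1⁻¹ ε)⁻¹,
               compP t.1.2.2 (actP S t.1.2.1⁻¹ ε))) ∧
  (∀ (s t : SGETriple S),
     (¬∃ ε, WFP S ε ∧ rngP S ε = srcP S s.1.2.2 ∧ t.1.1 = compP s.1.2.2 ε) →
     (¬∃ ε, WFP S ε ∧ rngP S ε = srcP S t.1.1 ∧ s.1.2.2 = compP t.1.1 ε) →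
       mul (some s) (some t) = none)

/-- Topological freeness of the standard action of `S_{G,E}` on `E^∞`: for every
nonzero `s = (α, g, β)`, every interior fixed point `ζ` of `s` satisfies `α = β`
and `ζ ∈ Z(ατ)` for some `τ` strongly fixed by `g`. -/
def TopFree (S : SelfSimGraph G V Ed) (act : G → (ℕ → Ed) → ℕ → Ed) : Prop :=
  ∀ (α : Pth V Ed) (g : G) (β : Pth V Ed),
    WFP S α → WFP S β → srcP S α = S.actV g (srcP S β) →
    ∀ ζ : InfPath S, ζ ∈ @interior (InfPath S) (infTop S) (FixSet S act α g β) →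
      α = β ∧ ∃ τ : Pth V Ed, WFP S τ ∧ rngP S τ = srcP S α ∧
        StronglyFixed S g τ ∧ InZ S (compP α τ) ζ.1


/-! ### Auxiliary lemmas -/

section Aux

variable (S : SelfSimGraph G V Ed)

theorem phi_one' (e : Ed) : S.phi 1 e = 1 := by
  have h := S.phi_cocycle 1 1 e
  rw [one_mul, S.actE_one] at h
  exact (left_eq_mul.mp h)

theorem actV_inv (g : G) (x : V) : S.actV g⁻¹ (S.actV g x) = x := by
  rw [← S.actV_mul, inv_mul_cancel, S.actV_one]

theorem actV_inv' (g : G) (x : V) : S.actV g (S.actV g⁻¹ x) = x := by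
  rw [← S.actV_mul, mul_inv_cancel, S.actV_one]

theorem actE_inv (g : G) (e : Ed) : S.actE g⁻¹ (S.actE g e) = e := by
  rw [← S.actE_mul, inv_mul_cancel, S.actE_one]

theorem actE_inv' (g : G) (e : Ed) : S.actE g (S.actE g⁻¹ e) = e := by
  rw [← S.actE_mul, mul_inv_cancel, S.actE_one]

theorem simple_act {x : V} (g : G) (h : SimpleVtx S x) : SimpleVtx S (S.actV g x) := by
  obtain ⟨e, he, hu⟩ := h
  refine ⟨S.actE g e, by show S.r _ = _; rw [S.r_act, he], ?_⟩
  intro y hy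
  have : S.actE g⁻¹ y = e := by
    apply hu
    rw [S.r_act, hy, actV_inv]
  rw [← this, actE_inv']

theorem lenP_actP (g : G) (p : Pth V Ed) : lenP (actP S g p) = lenP p := by
  induction p generalizing g with
  | nil x => rfl
  | cons e q ih => simp [actP, lenP, ih]

theorem rngP_actP (g : G) (p : Pth V Ed) : rngP S (actP S g p) = S.actV g (rngP S p) := by
  cases p with
  | nil x => rfl
  | cons e q => simp [actP, rngP, S.r_act]

theorem srcP_actP (g : G) (p : Pth V Ed) : srcP S (actP S g p) = S.actV g (srcP S p) := by
  induction p generalizing g with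
  | nil x => rfl
  | cons e q ih => simp [actP, srcP, ih, S.phi_vertex]

theorem wfp_actP (g : G) {p : Pth V Ed} (h : WFP S p) : WFP S (actP S g p) := by
  induction p generalizing g with
  | nil x => trivial
  | cons e q ih =>
    obtain ⟨h1, h2⟩ := h
    exact ⟨by rw [S.d_act, rngP_actP, h1, S.phi_vertex], ih _ h2⟩

theorem actP_one (p : Pth V Ed) : actP S 1 p = p := by
  induction p with
  | nil x => simp [actP, S.actV_one]
  | cons e q ih => simp [actP, S.actE_one, phi_one', ih]

theorem actP_mul (g h : G) (p : Pth V Ed) :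
    actP S (g * h) p = actP S g (actP S h p) := by
  induction p generalizing g h with
  | nil x => simp [actP, S.actV_mul]
  | cons e q ih => simp [actP, S.actE_mul, S.phi_cocycle, ih]

theorem phiP_mul (g h : G) (p : Pth V Ed) :
    phiP S (g * h) p = phiP S g (actP S h p) * phiP S h p := by
  induction p generalizing g h with
  | nil x => rfl
  | cons e q ih => simp [actP, phiP, S.phi_cocycle, ih]

theorem phiP_vertex (g : G) (p : Pth V Ed) (x : V) :
    S.actV (phiP S g p) x = S.actV g x := by
  induction p generalizing g with
  | nil y => rfl
  | cons e q ih => simp [phiP, ih, S.phi_vertex]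

theorem lenP_compP (p q : Pth V Ed) : lenP (compP p q) = lenP q + lenP p := by
  induction p with
  | nil x => simp [compP, lenP]
  | cons e r ih => simp [compP, lenP, ih]; omega

theorem srcP_compP (p q : Pth V Ed) : srcP S (compP p q) = srcP S q := by
  induction p with
  | nil x => rfl
  | cons e r ih => simp [compP, srcP, ih]

theorem rngP_compP {p q : Pth V Ed} (h : rngP S q = srcP S p) :
    rngP S (compP p q) = rngP S p := by
  cases p with
  | nil x => simpa [compP, rngP, srcP] using h
  | cons e r => rfl

theorem wfp_compP {p q : Pth V Ed} (hp : WFP S p) (hq : WFP S q)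
    (h : rngP S q = srcP S p) : WFP S (compP p q) := by
  induction p with
  | nil x => simpa [compP] using hq
  | cons e r ih =>
    obtain ⟨h1, h2⟩ := hp
    exact ⟨by rw [rngP_compP S (by simpa [srcP] using h), h1], ih h2 (by simpa [srcP] using h)⟩

theorem actP_compP (g : G) (p q : Pth V Ed) :
    actP S g (compP p q) = compP (actP S g p) (actP S (phiP S g p) q) := by
  induction p generalizing g with
  | nil x => rfl
  | cons e r ih => simp [compP, actP, phiP, ih]

theorem phiP_compP (g : G) (p q : Pth V Ed) :
    phiP S g (compP p q) = phiP S (phiP S g p) q := by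
  induction p generalizing g with
  | nil x => rfl
  | cons e r ih => simp [compP, phiP, ih]

/-- The `n`-th edge of a finite path, if any. -/
def getE : Pth V Ed → ℕ → Option Ed
  | Pth.nil _, _ => none
  | Pth.cons e _, 0 => some e
  | Pth.cons _ p, n + 1 => getE p n

theorem getE_lt {p : Pth V Ed} {m : ℕ} {e : Ed} (h : getE p m = some e) : m < lenP p := by
  induction p generalizing m with
  | nil x => simp [getE] at h
  | cons e' q ih =>
    cases m with
    | zero => simp [lenP]
    | succ k => have := ih (m := k) h; simp [lenP]; omega

theorem getE_ge {p : Pth V Ed} {m : ℕ} (h : lenP p ≤ m) : getE p m = none := by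
  induction p generalizing m with
  | nil x => rfl
  | cons e q ih =>
    cases m with
    | zero => simp [lenP] at h
    | succ k => exact ih (by simp [lenP] at h; omega)

theorem getE_actP {p : Pth V Ed} {k : ℕ} {e : Ed} (h : getE p k = some e) (g : G) :
    ∃ h' : G, getE (actP S g p) k = some (S.actE h' e) := by
  induction p generalizing k g with
  | nil x => simp [getE] at h
  | cons e' q ih =>
    cases k with
    | zero =>
      simp [getE] at h
      exact ⟨g, by simp [actP, getE, h]⟩
    | succ m => exact ih h (S.phi g e')

theorem getE_congr_actP {p q : Pth V Ed} (hpq : ∀ n, getE p n = getE q n) (g : G) :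
    ∀ n, getE (actP S g p) n = getE (actP S g q) n := by
  induction p generalizing q g with
  | nil x =>
    cases q with
    | nil y => intro n; rfl
    | cons e r => have := hpq 0; simp [getE] at this
  | cons e p' ih =>
    cases q with
    | nil y => have := hpq 0; simp [getE] at this
    | cons f r =>
      have h0 : e = f := by have := hpq 0; simpa [getE] using this
      subst h0
      intro n
      cases n with
      | zero => rfl
      | succ m => exact ih (fun k => hpq (k + 1)) (S.phi g e) m

theorem noEntry_getE {p : Pth V Ed} (h : NoEntry S p) {m : ℕ} {e : Ed}
    (he : getE p m = some e) : SimpleVtx S (S.d e) := by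
  induction p generalizing m with
  | nil x => simp [getE] at he
  | cons e' q ih =>
    cases m with
    | zero => simp [getE] at he; subst he; exact h.1
    | succ k => exact ih h.2 he

theorem noEntry_src {p : Pth V Ed} (hw : WFP S p) (hn : NoEntry S p)
    (hl : 1 ≤ lenP p) : SimpleVtx S (srcP S p) := by
  induction p with
  | nil x => simp [lenP] at hl
  | cons e q ih =>
    cases q with
    | nil x =>
      have : S.d e = x := hw.1
      show SimpleVtx S x
      rw [← this]
      exact hn.1
    | cons f r => exact ih hw.2 hn.2 (by simp [lenP])

theorem not_noEntry {p : Pth V Ed} (h : ¬ NoEntry S p) :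
    ∃ (m : ℕ) (e : Ed), getE p m = some e ∧ ¬ SimpleVtx S (S.d e) := by
  induction p with
  | nil x => exact absurd trivial h
  | cons e q ih =>
    by_cases hs : SimpleVtx S (S.d e)
    · have : ¬ NoEntry S q := fun hq => h ⟨hs, hq⟩
      obtain ⟨m, f, h1, h2⟩ := ih this
      exact ⟨m + 1, f, h1, h2⟩
    · exact ⟨0, e, rfl, hs⟩


theorem lenP_takeP (ξ : ℕ → Ed) (n : ℕ) : lenP (takeP S ξ n) = n := by
  induction n generalizing ξ with
  | zero => rfl
  | succ k ih => simp [takeP, lenP, ih]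

theorem rngP_takeP (ξ : ℕ → Ed) (n : ℕ) : rngP S (takeP S ξ n) = S.r (ξ 0) := by
  cases n <;> rfl

theorem getE_takeP (ξ : ℕ → Ed) {m n : ℕ} (h : m < n) :
    getE (takeP S ξ n) m = some (ξ m) := by
  induction n generalizing ξ m with
  | zero => omega
  | succ k ih =>
    cases m with
    | zero => rfl
    | succ j => exact ih _ (by omega)

theorem entry_eq_of_takeP {ξ ψ : ℕ → Ed} {n : ℕ} (h : takeP S ξ n = takeP S ψ n)
    {m : ℕ} (hm : m < n) : ξ m = ψ m := by
  have h1 := getE_takeP S ξ hm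
  have h2 := getE_takeP S ψ hm
  rw [h] at h1
  rw [h1] at h2
  exact Option.some.inj h2

theorem dropSeq_zero (ξ : ℕ → Ed) : dropSeq 0 ξ = ξ := by
  funext n; simp [dropSeq]

theorem dropSeq_dropSeq (a b : ℕ) (ξ : ℕ → Ed) :
    dropSeq a (dropSeq b ξ) = dropSeq (a + b) ξ := by
  funext n; simp [dropSeq]; ring_nf

theorem dropSeq_one (ξ : ℕ → Ed) : dropSeq 1 ξ = fun i => ξ (i + 1) := rfl

theorem takeP_add (ξ : ℕ → Ed) (n m : ℕ) :
    takeP S ξ (n + m) = compP (takeP S ξ n) (takeP S (dropSeq n ξ) m) := by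
  induction n generalizing ξ with
  | zero => simp [takeP, compP, dropSeq_zero]
  | succ k ih =>
    have : k + 1 + m = (k + m) + 1 := by omega
    rw [this]
    show Pth.cons (ξ 0) (takeP S (fun i => ξ (i+1)) (k+m)) = _
    rw [ih]
    have hd : dropSeq k (fun i => ξ (i + 1)) = dropSeq (k+1) ξ := by
      funext j; simp [dropSeq]; ring_nf
    rw [hd]
    rfl

theorem srcP_takeP {ξ : ℕ → Ed} (hwf : InfWF S ξ) (n : ℕ) :
    srcP S (takeP S ξ n) = S.r (ξ n) := by
  induction n generalizing ξ with
  | zero => rfl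
  | succ k ih =>
    show srcP S (takeP S (fun i => ξ (i+1)) k) = _
    exact ih (fun i => hwf (i + 1))

theorem wfp_takeP {ξ : ℕ → Ed} (hwf : InfWF S ξ) (n : ℕ) : WFP S (takeP S ξ n) := by
  induction n generalizing ξ with
  | zero => trivial
  | succ k ih =>
    refine ⟨?_, ih (fun i => hwf (i + 1))⟩
    rw [rngP_takeP]
    exact hwf 0

theorem wfp_take_succ {ξ : ℕ → Ed} {n : ℕ} (h : WFP S (takeP S ξ (n + 1))) :
    WFP S (takeP S ξ n) := by
  induction n generalizing ξ with
  | zero => trivial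
  | succ k ih =>
    obtain ⟨h1, h2⟩ := h
    refine ⟨?_, ih h2⟩
    rwa [rngP_takeP] at h1 ⊢

theorem wfp_take_le {ξ : ℕ → Ed} {k n : ℕ} (hkn : k ≤ n) (h : WFP S (takeP S ξ n)) :
    WFP S (takeP S ξ k) := by
  induction n with
  | zero => have : k = 0 := by omega
            subst this; trivial
  | succ m ih =>
    rcases Nat.lt_or_ge k (m+1) with h1 | h1
    · exact ih (by omega) (wfp_take_succ S h)
    · have : k = m + 1 := by omega
      subst this; exact h

theorem infWF_iff (ξ : ℕ → Ed) : InfWF S ξ ↔ ∀ n, WFP S (takeP S ξ n) := by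
  constructor
  · intro h n; exact wfp_takeP S h n
  · intro h i
    have key : ∀ (j : ℕ) (ψ : ℕ → Ed), WFP S (takeP S ψ (j + 2)) →
        S.d (ψ j) = S.r (ψ (j + 1)) := by
      intro j
      induction j with
      | zero =>
        intro ψ hw
        have := hw.1
        rwa [rngP_takeP] at this
      | succ k ih =>
        intro ψ hw
        exact ih (fun i => ψ (i + 1)) hw.2
    exact key i ξ (h (i + 2))

theorem prepSeq_compP (p q : Pth V Ed) (ξ : ℕ → Ed) :
    prepSeq (compP p q) ξ = prepSeq p (prepSeq q ξ) := by
  induction p generalizing ξ with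
  | nil x => rfl
  | cons e r ih =>
    funext n
    cases n with
    | zero => rfl
    | succ m => show prepSeq (compP r q) ξ m = _ ; rw [ih]; rfl

theorem dropSeq_prepSeq (p : Pth V Ed) (ξ : ℕ → Ed) :
    dropSeq (lenP p) (prepSeq p ξ) = ξ := by
  induction p generalizing ξ with
  | nil x => exact dropSeq_zero ξ
  | cons e r ih =>
    funext n
    show prepSeq (Pth.cons e r) ξ (n + (lenP r + 1)) = ξ n
    have : n + (lenP r + 1) = (n + lenP r) + 1 := by omega
    rw [this]
    show prepSeq r ξ (n + lenP r) = ξ n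
    have := congrFun (ih ξ) n
    simpa [dropSeq] using this

theorem prepSeq_at (p : Pth V Ed) (ξ : ℕ → Ed) (m : ℕ) :
    prepSeq p ξ (m + lenP p) = ξ m := by
  have := congrFun (dropSeq_prepSeq p ξ) m
  simpa [dropSeq] using this

theorem prepSeq_lt {p : Pth V Ed} {m : ℕ} (h : m < lenP p) (ξ ψ : ℕ → Ed) :
    prepSeq p ξ m = prepSeq p ψ m := by
  induction p generalizing m with
  | nil x => simp [lenP] at h
  | cons e r ih =>
    cases m with
    | zero => rfl
    | succ k => exact ih (by simp [lenP] at h; omega)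

theorem prepSeq_take_drop (ξ : ℕ → Ed) (n : ℕ) :
    prepSeq (takeP S ξ n) (dropSeq n ξ) = ξ := by
  induction n generalizing ξ with
  | zero => rw [dropSeq_zero]; rfl
  | succ k ih =>
    funext m
    cases m with
    | zero => rfl
    | succ j =>
      show prepSeq (takeP S (fun i => ξ (i+1)) k) (dropSeq (k+1) ξ) j = ξ (j + 1)
      have hd : dropSeq (k+1) ξ = dropSeq k (fun i => ξ (i + 1)) := by
        funext i; simp [dropSeq]; ring_nf
      rw [hd, ih (fun i => ξ (i + 1))]

theorem takeP_prepSeq (p : Pth V Ed) (ξ : ℕ → Ed) (m : ℕ) :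
    takeP S (prepSeq p ξ) (lenP p + m) = compP p (takeP S ξ m) := by
  induction p generalizing ξ with
  | nil x => simp [lenP, compP]; rfl
  | cons e r ih =>
    have : lenP r + 1 + m = (lenP r + m) + 1 := by omega
    show takeP S (prepSeq (Pth.cons e r) ξ) (lenP r + 1 + m) = _
    rw [this]
    show Pth.cons (prepSeq (Pth.cons e r) ξ 0)
      (takeP S (fun i => prepSeq (Pth.cons e r) ξ (i+1)) (lenP r + m)) = _
    have h2 : (fun i => prepSeq (Pth.cons e r) ξ (i+1)) = prepSeq r ξ := by
      funext i; rfl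
    rw [h2, ih]
    rfl

theorem takeP_prepSeq_len {p : Pth V Ed} {ξ : ℕ → Ed} (h : S.r (ξ 0) = srcP S p) :
    takeP S (prepSeq p ξ) (lenP p) = p := by
  induction p generalizing ξ with
  | nil x => show Pth.nil (S.r (ξ 0)) = Pth.nil x; rw [h]; rfl
  | cons e r ih =>
    show Pth.cons (prepSeq (Pth.cons e r) ξ 0)
      (takeP S (fun i => prepSeq (Pth.cons e r) ξ (i+1)) (lenP r)) = _
    have h2 : (fun i => prepSeq (Pth.cons e r) ξ (i+1)) = prepSeq r ξ := by
      funext i; rfl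
    rw [h2, ih (by exact h)]
    rfl

theorem infWF_dropSeq {ξ : ℕ → Ed} (h : InfWF S ξ) (n : ℕ) : InfWF S (dropSeq n ξ) := by
  intro i
  show S.d (ξ (i + n)) = S.r (ξ (i + 1 + n))
  have : i + 1 + n = (i + n) + 1 := by omega
  rw [this]
  exact h (i + n)

theorem infWF_prepSeq {p : Pth V Ed} {ξ : ℕ → Ed} (hp : WFP S p) (hξ : InfWF S ξ)
    (h : S.r (ξ 0) = srcP S p) : InfWF S (prepSeq p ξ) := by
  rw [infWF_iff]
  intro n
  rcases Nat.lt_or_ge n (lenP p) with h1 | h1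
  · apply wfp_take_le S (Nat.le_of_lt h1)
    rw [takeP_prepSeq_len S h]
    exact hp
  · obtain ⟨m, rfl⟩ : ∃ m, n = lenP p + m := ⟨n - lenP p, by omega⟩
    rw [takeP_prepSeq]
    exact wfp_compP S hp (wfp_takeP S hξ m) (by rw [rngP_takeP]; exact h)


section ActLemmas

variable {act : G → (ℕ → Ed) → ℕ → Ed} (hact : ActSpec S act)

include hact

theorem act_entry_take (g : G) (ξ : ℕ → Ed) (m : ℕ) :
    getE (actP S g (takeP S ξ (m + 1))) m = some (act g ξ m) := by
  rw [← hact g ξ (m + 1)]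
  exact getE_takeP S (act g ξ) (by omega)

theorem act_congr (g : G) {ξ ψ : ℕ → Ed} {n : ℕ} (h : ∀ k < n, ξ k = ψ k)
    {m : ℕ} (hm : m < n) : act g ξ m = act g ψ m := by
  have h1 := act_entry_take S hact g ξ m
  have h2 := act_entry_take S hact g ψ m
  have heq : ∀ k, getE (takeP S ξ (m+1)) k = getE (takeP S ψ (m+1)) k := by
    intro k
    rcases Nat.lt_or_ge k (m+1) with hk | hk
    · rw [getE_takeP S ξ hk, getE_takeP S ψ hk, h k (by omega)]
    · rw [getE_ge (by rw [lenP_takeP]; omega), getE_ge (by rw [lenP_takeP]; omega)]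
  rw [getE_congr_actP S heq g m, h2] at h1
  exact (Option.some.inj h1).symm

theorem act_entry_exists (g : G) (ξ : ℕ → Ed) (m : ℕ) :
    ∃ h' : G, act g ξ m = S.actE h' (ξ m) := by
  obtain ⟨h', hh⟩ := getE_actP S (getE_takeP S ξ (Nat.lt_succ_self m)) g
  have h1 := act_entry_take S hact g ξ m
  rw [hh] at h1
  exact ⟨h', (Option.some.inj h1).symm⟩

theorem r_act0 (g : G) (ξ : ℕ → Ed) : S.r (act g ξ 0) = S.actV g (S.r (ξ 0)) := by
  have h := hact g ξ 1
  have h1 := congrArg (rngP S) h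
  rw [rngP_takeP, rngP_actP, rngP_takeP] at h1
  exact h1

theorem act_one' (ξ : ℕ → Ed) : act 1 ξ = ξ := by
  funext m
  have h1 := act_entry_take S hact 1 ξ m
  rw [actP_one] at h1
  have h2 := getE_takeP S ξ (Nat.lt_succ_self m)
  rw [h1] at h2
  exact Option.some.inj h2

theorem act_mul' (g h : G) (ξ : ℕ → Ed) : act (g * h) ξ = act g (act h ξ) := by
  funext m
  have h1 := act_entry_take S hact (g * h) ξ m
  have h2 := act_entry_take S hact g (act h ξ) m
  rw [hact h ξ (m + 1), ← actP_mul] at h2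
  rw [h1] at h2
  exact Option.some.inj h2

theorem act_prepSeq (g : G) (p : Pth V Ed) (ξ : ℕ → Ed) :
    act g (prepSeq p ξ) = prepSeq (actP S g p) (act (phiP S g p) ξ) := by
  funext m
  have hm : m < lenP p + (m + 1) := by omega
  apply entry_eq_of_takeP S (n := lenP p + (m + 1)) _ hm
  rw [hact g (prepSeq p ξ) (lenP p + (m+1)), takeP_prepSeq, actP_compP]
  have hlen : lenP (actP S g p) = lenP p := lenP_actP S g p
  calc compP (actP S g p) (actP S (phiP S g p) (takeP S ξ (m+1)))
      = compP (actP S g p) (takeP S (act (phiP S g p) ξ) (m+1)) := by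
        rw [hact (phiP S g p) ξ (m+1)]
    _ = takeP S (prepSeq (actP S g p) (act (phiP S g p) ξ)) (lenP p + (m+1)) := by
        rw [← hlen, takeP_prepSeq]

theorem infWF_act (g : G) {ξ : ℕ → Ed} (h : InfWF S ξ) : InfWF S (act g ξ) := by
  rw [infWF_iff]
  intro n
  rw [hact g ξ n]
  exact wfp_actP S g (wfp_takeP S h n)

end ActLemmas

theorem pf_path (hpf : PseudoFree S) {g : G} {τ : Pth V Ed}
    (h1 : actP S g τ = τ) (h2 : phiP S g τ = 1) : g = 1 := by
  induction τ generalizing g with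
  | nil x => exact h2
  | cons e p ih =>
    have he : S.actE g e = e := by
      have := congrArg (fun q => getE q 0) h1
      simpa [actP, getE] using this
    have hp : actP S (S.phi g e) p = p := by
      have := congrArg (fun q =>
        match q with | Pth.nil _ => p | Pth.cons _ r => r) h1
      simpa [actP] using this
    have hphi : phiP S (S.phi g e) p = 1 := h2
    have := ih hp hphi
    exact hpf g e he (by rw [← he] at this ⊢; exact this ▸ this)

/-- A sourceless graph admits an infinite path from every vertex. -/
noncomputable def infFrom (hNS : ∀ x : V, ∃ e : Ed, S.r e = x) (x : V) : ℕ → Ed :=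
  fun n => Nat.rec (hNS x).choose (fun _ e => (hNS (S.d e)).choose) n

theorem infFrom_wf (hNS : ∀ x : V, ∃ e : Ed, S.r e = x) (x : V) :
    InfWF S (infFrom S hNS x) := by
  intro i
  exact ((hNS (S.d (infFrom S hNS x i))).choose_spec).symm

theorem infFrom_rng (hNS : ∀ x : V, ∃ e : Ed, S.r e = x) (x : V) :
    S.r (infFrom S hNS x 0) = x := (hNS x).choose_spec


section Core

variable {act : G → (ℕ → Ed) → ℕ → Ed} (hact : ActSpec S act)

include hact

/-- Existence of a solution of `ξ = γ (g·ξ)` for a nonempty path `γ`. -/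
theorem exists_fixSeq (g : G) (γ : Pth V Ed) (hL : 1 ≤ lenP γ) (e0 : Ed) :
    ∃ ξ : ℕ → Ed, prepSeq γ (act g ξ) = ξ := by
  set L := lenP γ with hLdef
  set F : (ℕ → Ed) → ℕ → Ed := fun ψ => prepSeq γ (act g ψ) with hF
  have F_congr : ∀ (n : ℕ) (ψ ψ' : ℕ → Ed), (∀ k < n, ψ k = ψ' k) →
      ∀ m < n + 1, F ψ m = F ψ' m := by
    intro n ψ ψ' hag m hm
    rcases Nat.lt_or_ge m L with h1 | h1
    · exact prepSeq_lt h1 _ _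
    · have hmL : m - L + L = m := by omega
      have e1 : F ψ m = act g ψ (m - L) := by
        have h0 := prepSeq_at γ (act g ψ) (m - L); rw [hmL] at h0; exact h0
      have e2 : F ψ' m = act g ψ' (m - L) := by
        have h0 := prepSeq_at γ (act g ψ') (m - L); rw [hmL] at h0; exact h0
      rw [e1, e2]
      exact act_congr S hact g hag (by omega)
  have hiter : ∀ (j n : ℕ) (ψ ψ' : ℕ → Ed), (∀ k < n, ψ k = ψ' k) →
      ∀ m < n + j, F^[j] ψ m = F^[j] ψ' m := by
    intro j
    induction j with
    | zero => intro n ψ ψ' hag m hm; simp only [Function.iterate_zero, id]; exact hag m (by omega)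
    | succ k ih =>
      intro n ψ ψ' hag m hm
      rw [Function.iterate_succ_apply, Function.iterate_succ_apply]
      exact ih (n + 1) (F ψ) (F ψ') (fun k hk => F_congr n ψ ψ' hag k hk)
        m (by omega)
  set ψ0 : ℕ → Ed := fun _ => e0 with hψ0
  set ξ : ℕ → Ed := fun m => F^[m + 1] ψ0 m with hξ
  have stable : ∀ j m, m < j → F^[j] ψ0 m = ξ m := by
    intro j m hmj
    have hj : j = (m + 1) + (j - m - 1) := by omega
    rw [hj, Function.iterate_add_apply]
    exact hiter (m + 1) 0 (F^[j - m - 1] ψ0) ψ0 (by omega) m (by omega)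
  refine ⟨ξ, ?_⟩
  funext m
  have hag : ∀ k < m + 1, ξ k = F^[m + 1] ψ0 k := by
    intro k hk; exact (stable (m + 1) k hk).symm
  have e1 : F ξ m = F (F^[m + 1] ψ0) m := F_congr (m + 1) ξ (F^[m+1] ψ0) hag m (by omega)
  have e2 : F (F^[m + 1] ψ0) m = F^[m + 2] ψ0 m := by
    rw [← Function.iterate_succ_apply' F (m+1) ψ0]
  show F ξ m = ξ m
  rw [e1, e2, stable (m + 2) m (by omega)]

theorem fix_unique {h : G} {ε : Pth V Ed} (hl : 1 ≤ lenP ε) {X Y : ℕ → Ed}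
    (hX : X = prepSeq ε (act h X)) (hY : Y = prepSeq ε (act h Y)) : X = Y := by
  funext m
  induction m using Nat.strong_induction_on with
  | _ m ih =>
    rcases Nat.lt_or_ge m (lenP ε) with h1 | h1
    · calc X m = prepSeq ε (act h X) m := by rw [← hX]
        _ = prepSeq ε (act h Y) m := prepSeq_lt h1 _ _
        _ = Y m := by rw [← hY]
    · have hmL : m - lenP ε + lenP ε = m := by omega
      calc X m = prepSeq ε (act h X) m := by rw [← hX]
        _ = act h X (m - lenP ε) := by
            have h0 := prepSeq_at ε (act h X) (m - lenP ε); rw [hmL] at h0; exact h0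
        _ = act h Y (m - lenP ε) := act_congr S hact h (fun k hk => ih k hk) (by omega)
        _ = prepSeq ε (act h Y) m := by
            have h0 := prepSeq_at ε (act h Y) (m - lenP ε); rw [hmL] at h0; exact h0.symm
        _ = Y m := by rw [← hY]

theorem iterEntry {ψ : ℕ → Ed} {h : G} {ε : Pth V Ed}
    (heq : ψ = prepSeq ε (act h ψ)) (m i : ℕ) :
    ∃ h' : G, ψ (m * lenP ε + i) = S.actE h' (ψ i) := by
  induction m with
  | zero => exact ⟨1, by rw [S.actE_one]; norm_num⟩
  | succ k ihm =>
    obtain ⟨h2, hh2⟩ := ihm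
    have harith : (k + 1) * lenP ε + i = (k * lenP ε + i) + lenP ε := by ring
    obtain ⟨h1, hh1⟩ := act_entry_exists S hact h ψ (k * lenP ε + i)
    refine ⟨h1 * h2, ?_⟩
    calc ψ ((k+1) * lenP ε + i) = prepSeq ε (act h ψ) ((k * lenP ε + i) + lenP ε) := by
          rw [← heq, harith]
      _ = act h ψ (k * lenP ε + i) := prepSeq_at ε _ _
      _ = S.actE h1 (ψ (k * lenP ε + i)) := hh1
      _ = S.actE h1 (S.actE h2 (ψ i)) := by rw [hh2]
      _ = S.actE (h1 * h2) (ψ i) := (S.actE_mul h1 h2 (ψ i)).symm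

theorem core_rigidity (hNS : ∀ x : V, ∃ e : Ed, S.r e = x)
    (h1 : ∀ (g : G) (γ : Pth V Ed), GCircuit S g γ → ¬NoEntry S γ)
    {ψ : ℕ → Ed} (hψ : InfWF S ψ) (h : G) {ε : Pth V Ed} (hl : 1 ≤ lenP ε)
    (hε : takeP S ψ (lenP ε) = ε) (M : ℕ)
    (hcyl : ∀ χ, InfWF S χ → (∀ k < M, χ k = ψ k) → χ = prepSeq ε (act h χ)) :
    False := by
  set L := lenP ε with hLdef
  have heq : ψ = prepSeq ε (act h ψ) := hcyl ψ hψ (fun _ _ => rfl)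
  have hψL : ψ L = act h ψ 0 := by
    calc ψ L = prepSeq ε (act h ψ) (0 + L) := by rw [← heq, Nat.zero_add]
      _ = act h ψ 0 := prepSeq_at ε _ _
  have hGC : GCircuit S h ε := by
    refine ⟨hε ▸ wfp_takeP S hψ L, hl, ?_⟩
    calc srcP S ε = srcP S (takeP S ψ L) := by rw [hε]
      _ = S.r (ψ L) := srcP_takeP S hψ L
      _ = S.r (act h ψ 0) := by rw [hψL]
      _ = S.actV h (S.r (ψ 0)) := r_act0 S hact h ψ
      _ = S.actV h (rngP S (takeP S ψ L)) := by rw [rngP_takeP]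
      _ = S.actV h (rngP S ε) := by rw [hε]
  obtain ⟨i, e, hgE, hns⟩ := not_noEntry S (h1 h ε hGC)
  have hiL : i < L := getE_lt hgE
  have he : e = ψ i := by
    have h2 := getE_takeP S ψ hiL
    rw [hε, hgE] at h2
    exact Option.some.inj h2
  set K := M * L + i with hK
  have hMK : M ≤ K := by
    have : M * 1 ≤ M * L := Nat.mul_le_mul_left M hl
    omega
  obtain ⟨h', hK'⟩ := iterEntry S hact heq M i
  have hnsK : ¬ SimpleVtx S (S.d (ψ K)) := by
    intro hs
    apply hns
    have h3 := simple_act S h'⁻¹ hs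
    rw [hK'] at h3
    rw [S.d_act, actV_inv] at h3
    rwa [he]
  have hrK1 : S.r (ψ (K + 1)) = S.d (ψ K) := (hψ K).symm
  have hex : ∃ e' : Ed, S.r e' = S.d (ψ K) ∧ e' ≠ ψ (K + 1) := by
    by_contra hno
    push_neg at hno
    exact hnsK ⟨ψ (K + 1), hrK1, fun y hy => hno y hy⟩
  obtain ⟨e', hre', hne'⟩ := hex
  set inner : ℕ → Ed :=
    prepSeq (Pth.cons e' (Pth.nil (S.d e'))) (infFrom S hNS (S.d e')) with hinner
  have hinner_wf : InfWF S inner :=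
    infWF_prepSeq S ⟨rfl, trivial⟩ (infFrom_wf S hNS (S.d e')) (infFrom_rng S hNS (S.d e'))
  have hinner0 : inner 0 = e' := rfl
  set χ : ℕ → Ed := prepSeq (takeP S ψ (K + 1)) inner with hχ
  have hχwf : InfWF S χ := by
    apply infWF_prepSeq S (wfp_takeP S hψ (K + 1)) hinner_wf
    rw [hinner0, srcP_takeP S hψ, hrK1, hre']
  have hagree : ∀ k < M, χ k = ψ k := by
    intro k hk
    have hkK : k < lenP (takeP S ψ (K + 1)) := by rw [lenP_takeP]; omega
    calc χ k = prepSeq (takeP S ψ (K + 1)) (dropSeq (K + 1) ψ) k := prepSeq_lt hkK _ _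
      _ = ψ k := by rw [prepSeq_take_drop]
  have hχψ : χ = ψ := fix_unique S hact hl (hcyl χ hχwf hagree) heq
  have hχK1 : χ (K + 1) = e' := by
    have h0 := prepSeq_at (takeP S ψ (K + 1)) inner 0
    rw [lenP_takeP, Nat.zero_add] at h0
    rw [hχ, h0, hinner0]
  rw [hχψ] at hχK1
  exact hne' hχK1.symm

end Core


section Topol

theorem cyl0_open (x : V) :
    @IsOpen (InfPath S) (infTop S) {η : InfPath S | S.r (η.1 0) = x} := by
  letI : TopologicalSpace Ed := ⊥
  haveI : DiscreteTopology Ed := discreteTopology_bot Ed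
  have hW : IsOpen {ψ : ℕ → Ed | S.r (ψ 0) = x} := by
    have := (continuous_apply (A := fun _ : ℕ => Ed) 0).isOpen_preimage
      {e : Ed | S.r e = x} (isOpen_discrete _)
    exact this
  exact ⟨_, hW, rfl⟩

theorem interior_cyl {A : Set (InfPath S)} {ζ : InfPath S}
    (h : ζ ∈ @interior (InfPath S) (infTop S) A) :
    ∃ N : ℕ, ∀ (ψ : ℕ → Ed) (hψ : InfWF S ψ),
      (∀ k < N, ψ k = ζ.1 k) → (⟨ψ, hψ⟩ : InfPath S) ∈ A := by
  letI : TopologicalSpace Ed := ⊥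
  letI : TopologicalSpace (InfPath S) := infTop S
  rw [mem_interior] at h
  obtain ⟨U, hUA, hUo, hζU⟩ := h
  obtain ⟨W, hWo, hWU⟩ := isOpen_induced_iff.mp hUo
  have hζW : ζ.1 ∈ W := by rw [← hWU] at hζU; exact hζU
  obtain ⟨I, u, hIu, hsub⟩ := isOpen_pi_iff.mp hWo ζ.1 hζW
  refine ⟨I.sup id + 1, fun ψ hψwf hag => ?_⟩
  apply hUA
  rw [← hWU]
  show ψ ∈ W
  apply hsub
  intro a ha
  have hlt : a < I.sup id + 1 := Nat.lt_succ_of_le (Finset.le_sup (f := id) ha)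
  rw [hag a hlt]
  exact (hIu a ha).2

end Topol

end Aux





/-- If `(G,E,φ)` is pseudo free, the standard action of `S_{G,E}` on `E^∞` is
topologically free iff (1) every `G`-circuit has an entry, and (2) for every
`g ≠ 1` and every vertex `x` there is `ζ ∈ Z(x)` with `g·ζ ≠ ζ`. -/
theorem statement18 {G V Ed : Type} [Group G] [Fintype V] [Fintype Ed]
    (S : SelfSimGraph G V Ed) (hNoSources : ∀ x : V, ∃ e : Ed, S.r e = x)
    (hpf : PseudoFree S)
    (act : G → (ℕ → Ed) → ℕ → Ed) (hact : ActSpec S act) :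
    TopFree S act ↔
      ((∀ (g : G) (γ : Pth V Ed), GCircuit S g γ → ¬NoEntry S γ) ∧
       (∀ g : G, g ≠ 1 → ∀ x : V,
          ∃ ζ : ℕ → Ed, InfWF S ζ ∧ rngInf S ζ = x ∧ act g ζ ≠ ζ)) := by
  constructor
  · -- Topological freeness implies the two conditions.
    intro hTF
    constructor
    · -- (1) every G-circuit has an entry
      intro g γ hGC hNE
      obtain ⟨hWFγ, hLγ, hsγ⟩ := hGC
      obtain ⟨ξ, hfix⟩ :=
        exists_fixSeq S hact g γ hLγ (hNoSources (rngP S γ)).choose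
      -- range of ξ
      have hr0 : S.r (ξ 0) = rngP S γ := by
        cases γ with
        | nil x => simp [lenP] at hLγ
        | cons e p =>
          have h0 : e = ξ 0 := congrFun hfix 0
          rw [← h0]; rfl
      -- well-formedness of ξ
      have hstep : ∀ n, WFP S (takeP S ξ n) → WFP S (takeP S ξ (lenP γ + n)) := by
        intro n hn
        have h1 : takeP S ξ (lenP γ + n) = compP γ (actP S g (takeP S ξ n)) := by
          conv_lhs => rw [← hfix]
          rw [takeP_prepSeq, hact]
        rw [h1]
        exact wfp_compP S hWFγ (wfp_actP S g hn)
          (by rw [rngP_actP, rngP_takeP, hr0]; exact hsγ.symm)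
      have hwf : InfWF S ξ := by
        rw [infWF_iff]
        intro n
        have hall : ∀ k, WFP S (takeP S ξ (k * lenP γ)) := by
          intro k
          induction k with
          | zero => show WFP S (takeP S ξ (0 * lenP γ)); rw [Nat.zero_mul]; trivial
          | succ k ih =>
            have harith : (k + 1) * lenP γ = lenP γ + k * lenP γ := by ring
            rw [harith]
            exact hstep _ ih
        exact wfp_take_le S (Nat.le_mul_of_pos_right n (by omega)) (hall n)
      have htakeγ : takeP S ξ (lenP γ) = γ := by
        conv_lhs => rw [← hfix]
        exact takeP_prepSeq_len S (by rw [r_act0 S hact, hr0]; exact hsγ.symm)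
      -- all vertices along ξ are simple
      have simple0 : SimpleVtx S (S.r (ξ 0)) := by
        rw [hr0]
        have h1 : rngP S γ = S.actV g⁻¹ (srcP S γ) := by rw [hsγ, actV_inv]
        rw [h1]
        exact simple_act S g⁻¹ (noEntry_src S hWFγ hNE hLγ)
      have simpled : ∀ m, SimpleVtx S (S.d (ξ m)) := by
        intro m
        induction m using Nat.strong_induction_on with
        | _ m ih =>
          rcases Nat.lt_or_ge m (lenP γ) with h1 | h1
          · have hg : getE γ m = some (ξ m) := by
              rw [← htakeγ]; exact getE_takeP S ξ h1
            exact noEntry_getE S hNE hg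
          · have hmL : m - lenP γ + lenP γ = m := by omega
            have h2 : ξ m = act g ξ (m - lenP γ) := by
              have h0 := prepSeq_at γ (act g ξ) (m - lenP γ)
              rw [hmL, hfix] at h0
              exact h0
            obtain ⟨h', hh⟩ := act_entry_exists S hact g ξ (m - lenP γ)
            rw [h2, hh, S.d_act]
            exact simple_act S h' (ih _ (by omega))
      -- uniqueness of infinite paths from the range of γ
      have uniq : ∀ η, InfWF S η → S.r (η 0) = rngP S γ → η = ξ := by
        intro η hη hr
        funext m
        induction m using Nat.strong_induction_on with
        | _ m ih =>
          cases m with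
          | zero =>
            obtain ⟨e, he, hu⟩ := simple0
            rw [hu (η 0) (by show S.r (η 0) = S.r (ξ 0); rw [hr, hr0]), hu (ξ 0) rfl]
          | succ k =>
            obtain ⟨e, he, hu⟩ := simpled k
            have hηk : η k = ξ k := ih k (by omega)
            have h1 : S.r (η (k + 1)) = S.d (ξ k) := by rw [← hη k, hηk]
            have h2 : S.r (ξ (k + 1)) = S.d (ξ k) := (hwf k).symm
            rw [hu _ h1, hu _ h2]
      -- ξ is an interior fixed point of (γ, g, r(γ))
      have hFixmem : ∀ η : InfPath S, S.r (η.1 0) = rngP S γ →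
          η ∈ FixSet S act γ g (Pth.nil (rngP S γ)) := by
        intro η hr
        have hηξ : η.1 = ξ := uniq η.1 η.2 hr
        constructor
        · show takeP S η.1 0 = Pth.nil (rngP S γ)
          show Pth.nil (S.r (η.1 0)) = _
          rw [hr]
        · show prepSeq γ (act g (dropSeq 0 η.1)) = η.1
          rw [hηξ, dropSeq_zero]
          exact hfix
      have hint : (⟨ξ, hwf⟩ : InfPath S) ∈
          @interior (InfPath S) (infTop S) (FixSet S act γ g (Pth.nil (rngP S γ))) := by
        exact @interior_maximal (InfPath S) (infTop S)
          (FixSet S act γ g (Pth.nil (rngP S γ)))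
          {η : InfPath S | S.r (η.1 0) = rngP S γ}
          (fun η hη => hFixmem η hη) (cyl0_open S _) ⟨ξ, hwf⟩
          (show (⟨ξ, hwf⟩ : InfPath S) ∈
            {η : InfPath S | S.r (η.1 0) = rngP S γ} from hr0)
      obtain ⟨hαβ, -⟩ := hTF γ g (Pth.nil (rngP S γ)) hWFγ trivial hsγ ⟨ξ, hwf⟩ hint
      rw [hαβ] at hLγ
      simp [lenP] at hLγ
    · -- (2) nontrivial elements move some point of every cylinder Z(x)
      intro g hg x
      by_contra hno
      push_neg at hno
      have hfix0 : act g (infFrom S hNoSources x) = infFrom S hNoSources x :=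
        hno (infFrom S hNoSources x) (infFrom_wf S hNoSources x) (infFrom_rng S hNoSources x)
      have hgx : S.actV g x = x := by
        have h0 := r_act0 S hact g (infFrom S hNoSources x)
        rw [hfix0, infFrom_rng] at h0
        exact h0.symm
      have hFixmem : ∀ η : InfPath S, S.r (η.1 0) = x →
          η ∈ FixSet S act (Pth.nil x) g (Pth.nil x) := by
        intro η hr
        constructor
        · show takeP S η.1 0 = Pth.nil x
          show Pth.nil (S.r (η.1 0)) = _
          rw [hr]
        · show prepSeq (Pth.nil x) (act g (dropSeq 0 η.1)) = η.1
          show act g (dropSeq 0 η.1) = η.1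
          rw [dropSeq_zero]
          exact hno η.1 η.2 hr
      have hint : (⟨infFrom S hNoSources x, infFrom_wf S hNoSources x⟩ : InfPath S) ∈
          @interior (InfPath S) (infTop S) (FixSet S act (Pth.nil x) g (Pth.nil x)) := by
        exact @interior_maximal (InfPath S) (infTop S)
          (FixSet S act (Pth.nil x) g (Pth.nil x))
          {η : InfPath S | S.r (η.1 0) = x}
          (fun η hη => hFixmem η hη) (cyl0_open S _)
          ⟨infFrom S hNoSources x, infFrom_wf S hNoSources x⟩
          (show (⟨infFrom S hNoSources x, infFrom_wf S hNoSources x⟩ : InfPath S) ∈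
            {η : InfPath S | S.r (η.1 0) = x} from infFrom_rng S hNoSources x)
      obtain ⟨-, τ, hτw, hτr, ⟨-, hτa, hτp⟩, -⟩ :=
        hTF (Pth.nil x) g (Pth.nil x) trivial trivial hgx.symm
          ⟨infFrom S hNoSources x, infFrom_wf S hNoSources x⟩ hint
      exact hg (pf_path S hpf hτa hτp)
  · -- The two conditions imply topological freeness.
    rintro ⟨h1, h2⟩
    intro α g β hα hβ hsrc ζ hζ
    have hζwf : InfWF S ζ.1 := ζ.2
    have hFix : ζ ∈ FixSet S act α g β := by
      letI : TopologicalSpace (InfPath S) := infTop S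
      exact interior_subset hζ
    obtain ⟨N0, hN0⟩ := interior_cyl S hζ
    set N := N0 + lenP α + lenP β + 1 with hNdef
    have hcyl : ∀ (ψ : ℕ → Ed) (hψ : InfWF S ψ), (∀ k < N, ψ k = ζ.1 k) →
        takeP S ψ (lenP β) = β ∧ prepSeq α (act g (dropSeq (lenP β) ψ)) = ψ := by
      intro ψ hψ hag
      exact hN0 ψ hψ (fun k hk => hag k (by omega))
    have hInZβ : takeP S ζ.1 (lenP β) = β := hFix.1
    have hfixeq : prepSeq α (act g (dropSeq (lenP β) ζ.1)) = ζ.1 := hFix.2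
    have hψwf : InfWF S (dropSeq (lenP β) ζ.1) := infWF_dropSeq S hζwf _
    have hrψ0 : S.r (dropSeq (lenP β) ζ.1 0) = srcP S β := by
      show S.r (ζ.1 (0 + lenP β)) = _
      rw [Nat.zero_add, ← srcP_takeP S hζwf (lenP β), hInZβ]
    have hrW0 : S.r (act g (dropSeq (lenP β) ζ.1) 0) = srcP S α := by
      rw [r_act0 S hact, hrψ0]
      exact hsrc.symm
    have hInZα : takeP S ζ.1 (lenP α) = α := by
      conv_lhs => rw [← hfixeq]
      exact takeP_prepSeq_len S hrW0
    -- the key consequence of interior fixedness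
    have hmk : ∀ χ, InfWF S χ → (∀ k < N, χ k = dropSeq (lenP β) ζ.1 k) →
        prepSeq α (act g χ) = prepSeq (takeP S ζ.1 (lenP β)) χ := by
      intro χ hχwf hχag
      have hrχ0 : S.r (χ 0) = srcP S β := by
        rw [hχag 0 (by omega)]
        exact hrψ0
      have hψ'wf : InfWF S (prepSeq (takeP S ζ.1 (lenP β)) χ) := by
        apply infWF_prepSeq S (wfp_takeP S hζwf _) hχwf
        rw [srcP_takeP S hζwf]
        rw [hχag 0 (by omega)]
        show S.r (ζ.1 (0 + lenP β)) = S.r (ζ.1 (lenP β))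
        rw [Nat.zero_add]
      have hag' : ∀ k < N, prepSeq (takeP S ζ.1 (lenP β)) χ k = ζ.1 k := by
        intro k hk
        rcases Nat.lt_or_ge k (lenP β) with hk1 | hk1
        · have hkl : k < lenP (takeP S ζ.1 (lenP β)) := by rw [lenP_takeP]; omega
          calc prepSeq (takeP S ζ.1 (lenP β)) χ k
              = prepSeq (takeP S ζ.1 (lenP β)) (dropSeq (lenP β) ζ.1) k :=
                prepSeq_lt hkl _ _
            _ = ζ.1 k := by rw [prepSeq_take_drop]
        · have hk2 : k - lenP β + lenP β = k := by omega
          have h0 := prepSeq_at (takeP S ζ.1 (lenP β)) χ (k - lenP β)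
          rw [lenP_takeP, hk2] at h0
          rw [h0, hχag (k - lenP β) (by omega)]
          show ζ.1 (k - lenP β + lenP β) = ζ.1 k
          rw [hk2]
      obtain ⟨-, hfix'⟩ := hcyl _ hψ'wf hag'
      have hdrop' : dropSeq (lenP β) (prepSeq (takeP S ζ.1 (lenP β)) χ) = χ := by
        have h0 := dropSeq_prepSeq (takeP S ζ.1 (lenP β)) χ
        rwa [lenP_takeP] at h0
      rw [hdrop'] at hfix'
      exact hfix'
    rcases Nat.lt_trichotomy (lenP α) (lenP β) with hlt | heqlen | hgt
    · -- impossible: |α| < |β|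
      exfalso
      have hsplit : takeP S ζ.1 (lenP β) =
          compP α (takeP S (dropSeq (lenP α) ζ.1) (lenP β - lenP α)) := by
        have hl0 : lenP β = lenP α + (lenP β - lenP α) := by omega
        conv_lhs => rw [hl0]
        rw [takeP_add, hInZα]
      have hkey : ∀ χ, InfWF S χ → (∀ k < N, χ k = dropSeq (lenP β) ζ.1 k) →
          χ = prepSeq (actP S g⁻¹ (takeP S (dropSeq (lenP α) ζ.1) (lenP β - lenP α)))
            (act (phiP S g⁻¹ (takeP S (dropSeq (lenP α) ζ.1) (lenP β - lenP α))) χ) := by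
        intro χ hχwf hχag
        have h0 := hmk χ hχwf hχag
        rw [hsplit, prepSeq_compP] at h0
        have h1 := congrArg (dropSeq (lenP α)) h0
        rw [dropSeq_prepSeq, dropSeq_prepSeq] at h1
        calc χ = act g⁻¹ (act g χ) := by
              rw [← act_mul' S hact, inv_mul_cancel, act_one' S hact]
          _ = act g⁻¹ (prepSeq (takeP S (dropSeq (lenP α) ζ.1) (lenP β - lenP α)) χ) := by
              rw [h1]
          _ = prepSeq (actP S g⁻¹ (takeP S (dropSeq (lenP α) ζ.1) (lenP β - lenP α)))
                (act (phiP S g⁻¹ (takeP S (dropSeq (lenP α) ζ.1) (lenP β - lenP α))) χ) :=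
              act_prepSeq S hact g⁻¹ _ χ
      have heq0 := hkey _ hψwf (fun _ _ => rfl)
      have hlε' : 1 ≤ lenP (actP S g⁻¹ (takeP S (dropSeq (lenP α) ζ.1) (lenP β - lenP α))) := by
        rw [lenP_actP, lenP_takeP]; omega
      have hε' : takeP S (dropSeq (lenP β) ζ.1)
          (lenP (actP S g⁻¹ (takeP S (dropSeq (lenP α) ζ.1) (lenP β - lenP α)))) =
          actP S g⁻¹ (takeP S (dropSeq (lenP α) ζ.1) (lenP β - lenP α)) := by
        conv_lhs => rw [heq0]
        apply takeP_prepSeq_len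
        rw [r_act0 S hact, srcP_actP, phiP_vertex]
        congr 1
        rw [srcP_takeP S (infWF_dropSeq S hζwf _)]
        show S.r (dropSeq (lenP β) ζ.1 0) = S.r (ζ.1 (lenP β - lenP α + lenP α))
        have hl0 : lenP β - lenP α + lenP α = lenP β := by omega
        rw [hl0]
        show S.r (ζ.1 (0 + lenP β)) = S.r (ζ.1 (lenP β))
        rw [Nat.zero_add]
      exact core_rigidity S hact hNoSources h1 hψwf _ hlε' hε' N hkey
    · -- |α| = |β| : conclusion
      have hαβ : α = β := by rw [← hInZα, ← hInZβ, heqlen]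
      subst hαβ
      have hfixψ : act g (dropSeq (lenP α) ζ.1) = dropSeq (lenP α) ζ.1 := by
        have h0 := hmk _ hψwf (fun _ _ => rfl)
        rw [hInZβ] at h0
        have h1 := congrArg (dropSeq (lenP α)) h0
        rwa [dropSeq_prepSeq, dropSeq_prepSeq] at h1
      have hτact : actP S g (takeP S (dropSeq (lenP α) ζ.1) N) =
          takeP S (dropSeq (lenP α) ζ.1) N := by
        rw [← hact g _ N, hfixψ]
      refine ⟨rfl, takeP S (dropSeq (lenP α) ζ.1) N, wfp_takeP S hψwf N, ?_,
        ⟨wfp_takeP S hψwf N, hτact, ?_⟩, ?_⟩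
      · rw [rngP_takeP]
        exact hrψ0
      · -- phiP g τ = 1
        by_contra hne
        obtain ⟨χ, hχwf, hχrng, hχne⟩ :=
          h2 (phiP S g (takeP S (dropSeq (lenP α) ζ.1) N)) hne
            (srcP S (takeP S (dropSeq (lenP α) ζ.1) N))
        apply hχne
        have hχ'wf : InfWF S (prepSeq (takeP S (dropSeq (lenP α) ζ.1) N) χ) :=
          infWF_prepSeq S (wfp_takeP S hψwf N) hχwf hχrng
        have hag : ∀ k < N, prepSeq (takeP S (dropSeq (lenP α) ζ.1) N) χ k =
            dropSeq (lenP α) ζ.1 k := by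
          intro k hk
          have hkl : k < lenP (takeP S (dropSeq (lenP α) ζ.1) N) := by
            rw [lenP_takeP]; omega
          calc prepSeq (takeP S (dropSeq (lenP α) ζ.1) N) χ k
              = prepSeq (takeP S (dropSeq (lenP α) ζ.1) N)
                  (dropSeq N (dropSeq (lenP α) ζ.1)) k := prepSeq_lt hkl _ _
            _ = dropSeq (lenP α) ζ.1 k := by rw [prepSeq_take_drop]
        have h0 := hmk _ hχ'wf hag
        rw [hInZβ] at h0
        have h0' := congrArg (dropSeq (lenP α)) h0
        rw [dropSeq_prepSeq, dropSeq_prepSeq] at h0'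
        rw [act_prepSeq S hact, hτact] at h0'
        have h0'' := congrArg (dropSeq (lenP (takeP S (dropSeq (lenP α) ζ.1) N))) h0'
        rwa [dropSeq_prepSeq, dropSeq_prepSeq] at h0''
      · -- ζ ∈ Z(ατ)
        show takeP S ζ.1 (lenP (compP α (takeP S (dropSeq (lenP α) ζ.1) N))) = _
        rw [lenP_compP, lenP_takeP, Nat.add_comm N (lenP α), takeP_add, hInZα]
    · -- impossible: |α| > |β|
      exfalso
      have hsplitα : α = compP β (takeP S (dropSeq (lenP β) ζ.1) (lenP α - lenP β)) := by
        rw [← hInZα]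
        have hl0 : lenP α = lenP β + (lenP α - lenP β) := by omega
        conv_lhs => rw [hl0]
        rw [takeP_add, hInZβ, lenP_takeP]
      have hkey : ∀ χ, InfWF S χ → (∀ k < N, χ k = dropSeq (lenP β) ζ.1 k) →
          χ = prepSeq (takeP S (dropSeq (lenP β) ζ.1) (lenP α - lenP β)) (act g χ) := by
        intro χ hχwf hχag
        have h0 := hmk χ hχwf hχag
        rw [hInZβ] at h0
        conv_lhs at h0 => rw [hsplitα]
        rw [prepSeq_compP] at h0
        have h1 := congrArg (dropSeq (lenP β)) h0
        rw [dropSeq_prepSeq, dropSeq_prepSeq] at h1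
        exact h1.symm
      have hlε : 1 ≤ lenP (takeP S (dropSeq (lenP β) ζ.1) (lenP α - lenP β)) := by
        rw [lenP_takeP]; omega
      have hε2 : takeP S (dropSeq (lenP β) ζ.1)
          (lenP (takeP S (dropSeq (lenP β) ζ.1) (lenP α - lenP β))) =
          takeP S (dropSeq (lenP β) ζ.1) (lenP α - lenP β) := by
        rw [lenP_takeP]
      exact core_rigidity S hact hNoSources h1 hψwf g hlε hε2 N hkey
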